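/- For every integer x ≥ 1, M(x) = ∑_{k=1}^{x} g⁻¹(k) · ( π(⌊x/k⌋) + 1 ), where π(y) is the number of primes not exceeding y. -/

import Mathlib

open Finset ArithmeticFunction

/-- The arithmetic function which is `1` at `1` and at primes, `0` elsewhere. -/
noncomputable def hfun : ArithmeticFunction ℂ :=
  ⟨fun n => if n = 1 then 1 else if n.Prime then 1 else 0, by norm_num [Nat.not_prime_zero]⟩

lemma hfun_apply (n : ℕ) : hfun n = if n = 1 then 1 else if n.Prime then 1 else 0 := rfl

/-- Dirichlet hyperbola-type rearrangement. -/
lemma hyperbola (x : ℕ) (F : ℕ → ℕ → ℂ) :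
    ∑ n ∈ Finset.Icc 1 x, ∑ p ∈ n.divisorsAntidiagonal, F p.1 p.2
      = ∑ k ∈ Finset.Icc 1 x, ∑ m ∈ Finset.Icc 1 (x / k), F k m := by
  have hdisj1 : ((Finset.Icc 1 x : Finset ℕ) : Set ℕ).PairwiseDisjoint
      (fun n => Nat.divisorsAntidiagonal n) := by
    intro a ha b hb hab
    simp only [Finset.disjoint_left]
    intro p hpa hpb
    rw [Nat.mem_divisorsAntidiagonal] at hpa hpb
    exact hab (hpa.1.symm.trans hpb.1)
  have hdisj2 : ((Finset.Icc 1 x : Finset ℕ) : Set ℕ).PairwiseDisjoint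
      (fun k => (Finset.Icc 1 (x / k)).image (fun m => (k, m))) := by
    intro a ha b hb hab
    simp only [Finset.disjoint_left, Finset.mem_image]
    rintro p ⟨m, _, rfl⟩ ⟨m', _, h⟩
    exact hab (Prod.mk.injEq .. ▸ h).1.symm
  have hset : (Finset.Icc 1 x).biUnion (fun n => Nat.divisorsAntidiagonal n)
      = (Finset.Icc 1 x).biUnion (fun k => (Finset.Icc 1 (x / k)).image (fun m => (k, m))) := by
    ext p
    simp only [Finset.mem_biUnion, Finset.mem_Icc, Nat.mem_divisorsAntidiagonal,
      Finset.mem_image]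
    constructor
    · rintro ⟨n, ⟨hn1, hnx⟩, rfl, hn0⟩
      have h1 : 1 ≤ p.1 := Nat.one_le_iff_ne_zero.2 fun h => hn0 (by simp [h])
      have h2 : 1 ≤ p.2 := Nat.one_le_iff_ne_zero.2 fun h => hn0 (by simp [h])
      refine ⟨p.1, ⟨h1, le_trans (Nat.le_mul_of_pos_right _ h2) hnx⟩,
        p.2, ⟨h2, (Nat.le_div_iff_mul_le h1).2 (mul_comm p.1 p.2 ▸ hnx)⟩, rfl⟩
    · rintro ⟨k, ⟨hk1, hkx⟩, m, ⟨hm1, hmd⟩, rfl⟩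
      have hmul : k * m ≤ x := mul_comm m k ▸ (Nat.le_div_iff_mul_le hk1).1 hmd
      exact ⟨k * m, ⟨Nat.one_le_iff_ne_zero.2 (by positivity), hmul⟩, rfl,
        by positivity⟩
  calc
    ∑ n ∈ Finset.Icc 1 x, ∑ p ∈ n.divisorsAntidiagonal, F p.1 p.2
        = ∑ p ∈ (Finset.Icc 1 x).biUnion (fun n => Nat.divisorsAntidiagonal n), F p.1 p.2 :=
      (Finset.sum_biUnion hdisj1).symm
    _ = ∑ p ∈ (Finset.Icc 1 x).biUnion
          (fun k => (Finset.Icc 1 (x / k)).image (fun m => (k, m))), F p.1 p.2 := by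
      rw [hset]
    _ = ∑ k ∈ Finset.Icc 1 x, ∑ p ∈ (Finset.Icc 1 (x / k)).image (fun m => (k, m)), F p.1 p.2 :=
      Finset.sum_biUnion hdisj2
    _ = ∑ k ∈ Finset.Icc 1 x, ∑ m ∈ Finset.Icc 1 (x / k), F k m := by
      refine Finset.sum_congr rfl fun k _ => ?_
      rw [Finset.sum_image (fun a _ b _ h => (Prod.mk.injEq .. ▸ h).2)]

lemma sum_hfun (y : ℕ) (hy : 1 ≤ y) :
    ∑ m ∈ Finset.Icc 1 y, hfun m = (Nat.primeCounting y : ℂ) + 1 := by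
  have : ∀ m : ℕ, hfun m
      = (if m = 1 then (1 : ℂ) else 0) + (if m.Prime then 1 else 0) := by
    intro m
    rw [hfun_apply]
    by_cases h1 : m = 1
    · simp [h1, Nat.not_prime_one]
    · simp [h1]
  simp_rw [this, Finset.sum_add_distrib]
  have h1 : ∑ m ∈ Finset.Icc 1 y, (if m = 1 then (1 : ℂ) else 0) = 1 := by
    rw [Finset.sum_ite_eq' (Finset.Icc 1 y) 1 (fun _ => (1 : ℂ))]
    simp [hy]
  have h2 : ∑ m ∈ Finset.Icc 1 y, (if m.Prime then (1 : ℂ) else 0)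
      = (Nat.primeCounting y : ℂ) := by
    rw [← Finset.sum_filter]
    have : (Finset.Icc 1 y).filter Nat.Prime = (Finset.range (y + 1)).filter Nat.Prime := by
      ext p
      simp only [Finset.mem_filter, Finset.mem_Icc, Finset.mem_range, Nat.lt_succ_iff]
      exact ⟨fun h => ⟨h.1.2, h.2⟩, fun h => ⟨⟨h.2.one_lt.le, h.1⟩, h.2⟩⟩
    rw [this, Finset.sum_const, nsmul_eq_mul, mul_one, Nat.primeCounting,
      Nat.primeCounting', Nat.count_eq_card_filter_range]
  rw [h1, h2, add_comm]

/-- Let `g` be the arithmetic function with `g(n) = ω(n) + 1` for `n ≥ 1`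
(`ω` counting distinct prime factors), and let `ginv` be its Dirichlet inverse
(characterized by `g * ginv = 1`).  Then for every `x ≥ 1`, the Mertens function satisfies
`M(x) = ∑_{k=1}^{x} ginv(k) (π(⌊x/k⌋) + 1)`, where `π` is the prime counting function. -/
theorem stmt_3 (g ginv : ArithmeticFunction ℂ)
    (hg : ∀ n : ℕ, 0 < n → g n = (ArithmeticFunction.cardDistinctFactors n : ℂ) + 1)
    (hginv : g * ginv = 1) (x : ℕ) (hx : 1 ≤ x) :
    ((∑ n ∈ Finset.Icc 1 x, ArithmeticFunction.moebius n : ℤ) : ℂ) =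
      ∑ k ∈ Finset.Icc 1 x, ginv k * ((Nat.primeCounting (x / k) : ℂ) + 1) := by
  -- Step 1: `g = ζ * hfun`.
  have hgz : g = (↑(ArithmeticFunction.zeta : ArithmeticFunction ℕ) : ArithmeticFunction ℂ) * hfun := by
    ext n
    rcases Nat.eq_zero_or_pos n with rfl | hn
    · simp
    rw [hg n hn, ArithmeticFunction.coe_zeta_mul_apply]
    simp_rw [hfun_apply]
    have hsplit : ∀ d : ℕ, (if d = 1 then (1 : ℂ) else if d.Prime then 1 else 0)
        = (if d = 1 then (1 : ℂ) else 0) + (if d.Prime then 1 else 0) := by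
      intro d
      by_cases h1 : d = 1
      · simp [h1, Nat.not_prime_one]
      · simp [h1]
    simp_rw [hsplit, Finset.sum_add_distrib]
    have h1 : ∑ d ∈ n.divisors, (if d = 1 then (1 : ℂ) else 0) = 1 := by
      rw [Finset.sum_ite_eq' n.divisors 1 (fun _ => (1 : ℂ))]
      simp [Nat.one_mem_divisors, hn.ne']
    have h2 : ∑ d ∈ n.divisors, (if d.Prime then (1 : ℂ) else 0)
        = (ArithmeticFunction.cardDistinctFactors n : ℂ) := by
      rw [← Finset.sum_filter, Finset.sum_const, nsmul_eq_mul, mul_one]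
      have hfilter : n.divisors.filter Nat.Prime = n.primeFactors := by
        ext p
        simp [Nat.mem_divisors, Nat.mem_primeFactors, hn.ne', and_comm]
      rw [hfilter]
      norm_cast
    rw [h1, h2, add_comm]
  -- Step 2: `moebius = ginv * hfun` (as ℂ-valued arithmetic functions).
  have hmu : (↑(ArithmeticFunction.moebius) : ArithmeticFunction ℂ) = ginv * hfun := by
    have := ArithmeticFunction.coe_moebius_mul_coe_zeta (R := ℂ)
    calc (↑(ArithmeticFunction.moebius) : ArithmeticFunction ℂ)
        = (↑(ArithmeticFunction.moebius) : ArithmeticFunction ℂ) * (g * ginv) := by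
          rw [hginv, mul_one]
      _ = ginv * hfun := by
          rw [hgz]
          rw [show (↑(ArithmeticFunction.moebius) : ArithmeticFunction ℂ) *
              ((↑(ArithmeticFunction.zeta : ArithmeticFunction ℕ) : ArithmeticFunction ℂ) * hfun * ginv)
              = ((↑(ArithmeticFunction.moebius) : ArithmeticFunction ℂ) *
                (↑(ArithmeticFunction.zeta : ArithmeticFunction ℕ) : ArithmeticFunction ℂ)) * (ginv * hfun) by ring]
          rw [this, one_mul]
  -- Step 3: sum both sides over `Icc 1 x` and apply the hyperbola rearrangement.
  have hcast : ((∑ n ∈ Finset.Icc 1 x, ArithmeticFunction.moebius n : ℤ) : ℂ)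
      = ∑ n ∈ Finset.Icc 1 x, (↑(ArithmeticFunction.moebius) : ArithmeticFunction ℂ) n := by
    push_cast
    simp [ArithmeticFunction.intCoe_apply]
  rw [hcast, hmu]
  have hmul : ∀ n : ℕ, (ginv * hfun) n
      = ∑ p ∈ n.divisorsAntidiagonal, ginv p.1 * hfun p.2 := fun n =>
    ArithmeticFunction.mul_apply
  simp_rw [hmul]
  rw [hyperbola x (fun k m => ginv k * hfun m)]
  refine Finset.sum_congr rfl fun k hk => ?_
  rw [← Finset.mul_sum, sum_hfun (x / k)]
  rw [Finset.mem_Icc] at hk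
  exact (Nat.one_le_div_iff hk.1).2 hk.2
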